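/- Let D be a proper domain in a real Banach space satisfying k_D(z₁,z₂) ≤ c'·log(1 + |z₁−z₂|/min{d_D(z₁),d_D(z₂)}) for all z₁,z₂ ∈ D, and let f: D → D' be an (M,C)-CQH homeomorphism onto a proper domain D'. If points z₁, z₀ ∈ D satisfy d_{D'}(f(z₀))/d_{D'}(f(z₁)) ≥ e^{2MC}·λ^{2M c'} for some λ ≥ 1, then |z₁ − z₀| ≥ (λ² − 1)·min{d_D(z₁), d_D(z₀)}; in particular min{d_D(z₁), d_D(z₀)} ≤ |z₁ − z₀|/(λ² − 1) when λ > 1. -/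

import Mathlib

open Set Metric

section Defs

variable {E : Type*} [NormedAddCommGroup E] [NormedSpace ℝ E]
variable {E' : Type*} [NormedAddCommGroup E'] [NormedSpace ℝ E']

/-- Distance from a point to the boundary of `D`. -/
noncomputable def bdDist (D : Set E) (z : E) : ℝ := Metric.infDist z (frontier D)

/-- `γ` (with derivative `γ'`) is a rectifiable curve in `D` from `x` to `y`,
parametrized on `[0,1]`. -/
def IsCurve (D : Set E) (γ γ' : ℝ → E) (x y : E) : Prop :=
  (∀ t ∈ Icc (0:ℝ) 1, γ t ∈ D) ∧ (∀ t ∈ Icc (0:ℝ) 1, HasDerivAt γ (γ' t) t) ∧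
    ContinuousOn γ' (Icc 0 1) ∧ γ 0 = x ∧ γ 1 = y

/-- Arclength of a curve between parameter values `a` and `b`. -/
noncomputable def clen (γ' : ℝ → E) (a b : ℝ) : ℝ := ∫ t in a..b, ‖γ' t‖

/-- Quasihyperbolic length of a curve between parameter values `a` and `b`. -/
noncomputable def qhLen (D : Set E) (γ γ' : ℝ → E) (a b : ℝ) : ℝ :=
  ∫ t in a..b, ‖γ' t‖ / bdDist D (γ t)

/-- The quasihyperbolic distance in `D`. -/
noncomputable def qhDist (D : Set E) (x y : E) : ℝ :=
  sInf {l : ℝ | ∃ γ γ' : ℝ → E, IsCurve D γ γ' x y ∧ l = qhLen D γ γ' 0 1}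

/-- `γ` is a `ν`-neargeodesic from `x` to `y` in `D`. -/
def IsNeargeodesic (ν : ℝ) (D : Set E) (γ γ' : ℝ → E) (x y : E) : Prop :=
  IsCurve D γ γ' x y ∧ ∀ s t : ℝ, 0 ≤ s → s ≤ t → t ≤ 1 →
    qhLen D γ γ' s t ≤ ν * qhDist D (γ s) (γ t)

/-- `D` is a `c`-uniform domain: any two points are joined by a double `c`-cone arc. -/
def IsUniform (c : ℝ) (D : Set E) : Prop :=
  ∀ x ∈ D, ∀ y ∈ D, ∃ γ γ' : ℝ → E, IsCurve D γ γ' x y ∧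
    (∀ t ∈ Icc (0:ℝ) 1, min (clen γ' 0 t) (clen γ' t 1) ≤ c * bdDist D (γ t)) ∧
    clen γ' 0 1 ≤ c * ‖x - y‖

/-- `f` is `C`-coarsely `M`-quasihyperbolic from `D` to `D'`. -/
def IsCQH (M C : ℝ) (D : Set E) (D' : Set E') (f : E → E') : Prop :=
  ∀ x ∈ D, ∀ y ∈ D,
    (qhDist D x y - C) / M ≤ qhDist D' (f x) (f y) ∧
      qhDist D' (f x) (f y) ≤ M * qhDist D x y + C

/-- `f` is a homeomorphism of `S` onto `S'`. -/
def IsHomeoOn (f : E → E') (S : Set E) (S' : Set E') : Prop :=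
  ContinuousOn f S ∧ InjOn f S ∧ f '' S = S' ∧
    ∃ g : E' → E, ContinuousOn g S' ∧ ∀ x ∈ S, g (f x) = x

/-- The cross ratio of a quadruple. -/
noncomputable def crossRatio (a b c d : E) : ℝ :=
  (dist a b / dist a c) * (dist c d / dist b d)

/-- `F` is `η`-quasimöbius relative to `∂D` (on the closure of `D`). -/
def IsQMRelBoundary (η : ℝ → ℝ) (D : Set E) (F : E → E') : Prop :=
  ∀ a b c d : E, a ∈ closure D → b ∈ closure D → c ∈ closure D → d ∈ closure D →
    a ≠ b → a ≠ c → a ≠ d → b ≠ c → b ≠ d → c ≠ d →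
    ((a ∈ frontier D ∧ d ∈ frontier D) ∨ (b ∈ frontier D ∧ c ∈ frontier D)) →
    crossRatio (F a) (F b) (F c) (F d) ≤ η (crossRatio a b c d)

/-- `η` is a self-homeomorphism of `[0,∞)` (a distortion gauge). -/
def IsGauge (η : ℝ → ℝ) : Prop :=
  StrictMonoOn η (Ici 0) ∧ ContinuousOn η (Ici 0) ∧ η 0 = 0 ∧ SurjOn η (Ici 0) (Ici 0)

end Defs

section AuxLemmas

variable {E : Type*} [NormedAddCommGroup E] [NormedSpace ℝ E]

lemma bdDist_pos' (D : Set E) (hD : IsOpen D) (hne : D ≠ univ) {z : E} (hz : z ∈ D) :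
    0 < bdDist D z := by
  have hfr : (frontier D).Nonempty := by
    rcases eq_empty_or_nonempty (frontier D) with h | h
    · exact absurd ((isClopen_iff_frontier_eq_empty.mpr h).eq_univ ⟨z, hz⟩) hne
    · exact h
  rw [bdDist, ← isClosed_frontier.notMem_iff_infDist_pos hfr]
  exact fun h => h.2 (hD.subset_interior_iff.mpr subset_rfl hz)

/-- Chains of segments inside `D`. -/
def SegChain (D : Set E) (a b : E) : Prop :=
  ∃ n : ℕ, ∃ p : ℕ → E, p 0 = a ∧ p n = b ∧ ∀ i < n, segment ℝ (p i) (p (i + 1)) ⊆ D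

lemma segChain_refl (D : Set E) (a : E) : SegChain D a a :=
  ⟨0, fun _ => a, rfl, rfl, by simp⟩

lemma SegChain.snoc {D : Set E} {a b c : E} (h : SegChain D a b)
    (hseg : segment ℝ b c ⊆ D) : SegChain D a c := by
  obtain ⟨n, p, hp0, hpn, hp⟩ := h
  refine ⟨n + 1, fun i => if i ≤ n then p i else c, by simp [hp0], by simp, ?_⟩
  intro i hi
  rcases lt_or_eq_of_le (Nat.lt_succ_iff.mp hi) with h' | h'
  · have h1 : i ≤ n := h'.le
    have h2 : i + 1 ≤ n := h'
    simpa [h1, h2] using hp i h'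
  · subst h'
    simpa [hpn] using hseg

lemma segChain_all {D : Set E} (hD : IsOpen D) (hconn : IsConnected D)
    {x : E} (hx : x ∈ D) : ∀ y ∈ D, SegChain D x y := by
  by_contra hcon
  push_neg at hcon
  obtain ⟨y₀, hy₀, hy₀'⟩ := hcon
  set U : Set E := {y | y ∈ D ∧ SegChain D x y} with hU
  set V : Set E := {y | y ∈ D ∧ ¬ SegChain D x y} with hV
  have hUopen : IsOpen U := by
    rw [Metric.isOpen_iff]
    intro y hy
    obtain ⟨r, hr, hball⟩ := Metric.isOpen_iff.mp hD y hy.1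
    refine ⟨r, hr, fun w hw => ⟨hball hw, hy.2.snoc ?_⟩⟩
    exact fun u hu => hball ((convex_ball y r).segment_subset (mem_ball_self hr) hw hu)
  have hVopen : IsOpen V := by
    rw [Metric.isOpen_iff]
    intro y hy
    obtain ⟨r, hr, hball⟩ := Metric.isOpen_iff.mp hD y hy.1
    refine ⟨r, hr, fun w hw => ⟨hball hw, fun hchain => hy.2 (hchain.snoc ?_)⟩⟩
    exact fun u hu => hball ((convex_ball y r).segment_subset hw (mem_ball_self hr) hu)
  obtain ⟨z, -, hz1, hz2⟩ := hconn.isPreconnected U V hUopen hVopen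
    (fun w hw => by by_cases h : SegChain D x w
                    · exact Or.inl ⟨hw, h⟩
                    · exact Or.inr ⟨hw, h⟩)
    ⟨x, hx, hx, segChain_refl D x⟩ ⟨y₀, hy₀, hy₀, hy₀'⟩
  exact hz2.2 hz1.2

open Real in
lemma SegChain.exists_isCurve {D : Set E} {a b : E} (h : SegChain D a b) (ha : a ∈ D) :
    ∃ γ γ' : ℝ → E, IsCurve D γ γ' a b := by
  obtain ⟨n, p, hp0, hpn, hseg⟩ := h
  set v : ℕ → E := fun j => p (j + 1) - p j with hv
  refine ⟨fun t => a + ∑ j ∈ Finset.range n, smoothTransition ((n : ℝ) * t - j) • v j,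
    fun t => ∑ j ∈ Finset.range n,
      (deriv smoothTransition ((n : ℝ) * t - j) * n) • v j, ?_, ?_, ?_, ?_, ?_⟩
  · -- membership
    intro t ht
    rcases Nat.eq_zero_or_pos n with hn | hn
    · simpa [hn] using ha
    have hn1 : (1:ℝ) ≤ n := by exact_mod_cast hn
    set i : ℕ := min (n - 1) ⌊(n : ℝ) * t⌋₊ with hi
    have hin : i < n := lt_of_le_of_lt (min_le_left _ _) (Nat.sub_lt hn one_pos)
    have hnt0 : (0:ℝ) ≤ (n : ℝ) * t := mul_nonneg (Nat.cast_nonneg n) ht.1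
    have hile : (i : ℝ) ≤ (n : ℝ) * t := by
      rcases min_cases (n - 1) ⌊(n : ℝ) * t⌋₊ with ⟨he, hle⟩ | ⟨he, hle⟩
      · rw [hi, he]
        exact le_trans (by exact_mod_cast hle) (Nat.floor_le hnt0)
      · rw [hi, he]; exact Nat.floor_le hnt0
    have hlt : (n : ℝ) * t ≤ (i : ℝ) + 1 := by
      rcases min_cases (n - 1) ⌊(n : ℝ) * t⌋₊ with ⟨he, hle⟩ | ⟨he, hle⟩
      · rw [hi, he]
        have hc : ((n - 1 : ℕ) : ℝ) = (n : ℝ) - 1 := by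
          rw [Nat.cast_sub hn]; simp
        rw [hc]
        calc (n : ℝ) * t ≤ (n : ℝ) * 1 :=
              mul_le_mul_of_nonneg_left ht.2 (Nat.cast_nonneg n)
          _ = (n : ℝ) - 1 + 1 := by ring
      · rw [hi, he]
        exact (Nat.lt_floor_add_one _).le
    have hterm1 : ∀ j ∈ Finset.range i,
        smoothTransition ((n : ℝ) * t - j) • v j = v j := by
      intro j hj
      have hj' : (j : ℝ) + 1 ≤ i := by
        exact_mod_cast Nat.succ_le_of_lt (Finset.mem_range.mp hj)
      rw [smoothTransition.one_of_one_le (by linarith), one_smul]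
    have hterm0 : ∀ j ∈ Finset.Ico (i + 1) n,
        smoothTransition ((n : ℝ) * t - j) • v j = 0 := by
      intro j hj
      have hj' : (i : ℝ) + 1 ≤ j := by
        exact_mod_cast (Finset.mem_Ico.mp hj).1
      rw [smoothTransition.zero_of_nonpos (by linarith), zero_smul]
    have hsum : ∑ j ∈ Finset.range n, smoothTransition ((n : ℝ) * t - j) • v j
        = (p i - p 0) + smoothTransition ((n : ℝ) * t - i) • v i := by
      rw [← Finset.sum_range_add_sum_Ico _ (Nat.succ_le_of_lt hin),
        Finset.sum_range_succ, Finset.sum_eq_zero hterm0, add_zero,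
        Finset.sum_congr rfl hterm1, Finset.sum_range_sub (fun j => p j)]
    have hformula : a + ∑ j ∈ Finset.range n, smoothTransition ((n : ℝ) * t - j) • v j
        = p i + smoothTransition ((n : ℝ) * t - i) • (p (i + 1) - p i) := by
      rw [hsum, hp0, hv]; abel
    show a + ∑ j ∈ Finset.range n, smoothTransition ((n : ℝ) * t - j) • v j ∈ D
    rw [hformula]
    refine hseg i hin ?_
    rw [segment_eq_image']
    exact ⟨_, ⟨smoothTransition.nonneg _, smoothTransition.le_one _⟩, rfl⟩
  · -- derivative
    intro t _
    refine HasDerivAt.const_add a (HasDerivAt.fun_sum fun j _ => ?_)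
    have inner : HasDerivAt (fun t : ℝ => (n : ℝ) * t - j) (n : ℝ) t := by
      simpa using ((hasDerivAt_id t).const_mul (n : ℝ)).sub_const (j : ℝ)
    have outer : HasDerivAt smoothTransition
        (deriv smoothTransition ((n : ℝ) * t - j)) ((n : ℝ) * t - j) :=
      ((smoothTransition.contDiff (n := 1)).differentiable one_ne_zero _).hasDerivAt
    exact (outer.comp t inner).smul_const (v j)
  · -- continuity of derivative
    refine Continuous.continuousOn ?_
    refine continuous_finset_sum _ fun j _ => Continuous.smul ?_ continuous_const
    exact (((smoothTransition.contDiff (n := 1)).continuous_deriv le_rfl).comp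
      (by continuity)).mul continuous_const
  · -- γ 0 = a
    have hz : ∀ j ∈ Finset.range n, smoothTransition ((n : ℝ) * 0 - j) • v j = 0 := by
      intro j _
      rw [smoothTransition.zero_of_nonpos (by simp), zero_smul]
    show a + ∑ j ∈ Finset.range n, smoothTransition ((n : ℝ) * 0 - j) • v j = a
    rw [Finset.sum_eq_zero hz, add_zero]
  · -- γ 1 = b
    have ho : ∀ j ∈ Finset.range n, smoothTransition ((n : ℝ) * 1 - j) • v j = v j := by
      intro j hj
      have hj' : (j : ℝ) + 1 ≤ n := by
        exact_mod_cast Nat.succ_le_of_lt (Finset.mem_range.mp hj)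
      rw [smoothTransition.one_of_one_le (by linarith), one_smul]
    show a + ∑ j ∈ Finset.range n, smoothTransition ((n : ℝ) * 1 - j) • v j = b
    rw [Finset.sum_congr rfl ho, hv, Finset.sum_range_sub (fun j => p j), hp0, hpn]
    abel

variable [CompleteSpace E]

lemma qhLen_lower {D : Set E} (hD : IsOpen D) (hne : D ≠ univ)
    {γ γ' : ℝ → E} {a b : E} (hc : IsCurve D γ γ' a b) :
    Real.log (bdDist D b) - Real.log (bdDist D a) ≤ qhLen D γ γ' 0 1 := by
  obtain ⟨hmem, hderiv, hγ'cont, h0, h1⟩ := hc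
  set u : ℝ → ℝ := fun t => bdDist D (γ t) with hu
  have hγcont : ContinuousOn γ (Icc 0 1) := fun t ht =>
    (hderiv t ht).continuousAt.continuousWithinAt
  have hucont : ContinuousOn u (Icc 0 1) :=
    (continuous_infDist_pt (frontier D)).comp_continuousOn hγcont
  have hupos : ∀ t ∈ Icc (0:ℝ) 1, 0 < u t := fun t ht =>
    bdDist_pos' D hD hne (hmem t ht)
  set cl : ℝ → ℝ := fun t => max 0 (min t 1) with hcl
  have hclmem : ∀ t, cl t ∈ Icc (0:ℝ) 1 :=
    fun t => ⟨le_max_left _ _, max_le (by norm_num) (min_le_right _ _)⟩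
  have hclid : ∀ t ∈ Icc (0:ℝ) 1, cl t = t := fun t ht => by
    rw [hcl]; simp only [min_eq_left ht.2, max_eq_right ht.1]
  set h : ℝ → ℝ := fun t => ‖γ' (cl t)‖ with hh
  have hhcont : Continuous h := by
    refine (hγ'cont.comp_continuous ?_ hclmem).norm
    exact continuous_const.max (continuous_id.min continuous_const)
  have hhnn : ∀ t, 0 ≤ h t := fun t => norm_nonneg _
  set w : ℝ → ℝ := fun t => u 0 + ∫ s in (0:ℝ)..t, h s with hw
  have hwderiv : ∀ t : ℝ, HasDerivAt w (h t) t := fun t =>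
    (intervalIntegral.integral_hasDerivAt_right (hhcont.intervalIntegrable _ _)
      (hhcont.stronglyMeasurableAtFilter _ _) hhcont.continuousAt).const_add (u 0)
  have hwpos : ∀ t ∈ Icc (0:ℝ) 1, 0 < w t := by
    intro t ht
    have h1' : (0:ℝ) ≤ ∫ s in (0:ℝ)..t, h s :=
      intervalIntegral.integral_nonneg ht.1 (fun s _ => hhnn s)
    have h2' := hupos 0 (by norm_num)
    simp only [hw]; linarith
  have hle : ∀ t ∈ Icc (0:ℝ) 1, u t ≤ w t := by
    intro t ht
    have hsub : Icc (0:ℝ) t ⊆ Icc 0 1 := Icc_subset_Icc le_rfl ht.2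
    have huIcc : uIcc (0:ℝ) t = Icc 0 t := uIcc_of_le ht.1
    have hint : IntervalIntegrable γ' MeasureTheory.volume 0 t :=
      (hγ'cont.mono (huIcc ▸ hsub)).intervalIntegrable
    have heq : ∫ s in (0:ℝ)..t, γ' s = γ t - γ 0 :=
      intervalIntegral.integral_eq_sub_of_hasDerivAt
        (fun s hs => hderiv s (hsub (huIcc ▸ hs))) hint
    have hnorm : ‖γ t - γ 0‖ ≤ ∫ s in (0:ℝ)..t, ‖γ' s‖ := by
      rw [← heq]
      exact intervalIntegral.norm_integral_le_integral_norm ht.1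
    have hcongr : ∫ s in (0:ℝ)..t, ‖γ' s‖ = ∫ s in (0:ℝ)..t, h s := by
      refine intervalIntegral.integral_congr fun s hs => ?_
      show ‖γ' s‖ = ‖γ' (cl s)‖
      rw [hclid s (hsub (huIcc ▸ hs))]
    have hlip : u t ≤ u 0 + dist (γ t) (γ 0) := Metric.infDist_le_infDist_add_dist
    rw [dist_eq_norm] at hlip
    calc u t ≤ u 0 + ‖γ t - γ 0‖ := hlip
      _ ≤ u 0 + ∫ s in (0:ℝ)..t, ‖γ' s‖ := by linarith
      _ = w t := by rw [hcongr]
  have hlogderiv : ∀ t ∈ uIcc (0:ℝ) 1,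
      HasDerivAt (fun s => Real.log (w s)) (h t / w t) t := by
    intro t ht
    rw [uIcc_of_le (by norm_num : (0:ℝ) ≤ 1)] at ht
    exact (hwderiv t).log (ne_of_gt (hwpos t ht))
  have hwcont : Continuous w :=
    continuous_iff_continuousAt.mpr fun t => (hwderiv t).continuousAt
  have hintlw : IntervalIntegrable (fun t => h t / w t) MeasureTheory.volume 0 1 := by
    apply ContinuousOn.intervalIntegrable
    rw [uIcc_of_le (by norm_num : (0:ℝ) ≤ 1)]
    exact hhcont.continuousOn.div hwcont.continuousOn fun t ht => ne_of_gt (hwpos t ht)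
  have hftc : ∫ t in (0:ℝ)..1, h t / w t = Real.log (w 1) - Real.log (w 0) :=
    intervalIntegral.integral_eq_sub_of_hasDerivAt hlogderiv hintlw
  have hintq : IntervalIntegrable (fun t => ‖γ' t‖ / u t) MeasureTheory.volume 0 1 := by
    apply ContinuousOn.intervalIntegrable
    rw [uIcc_of_le (by norm_num : (0:ℝ) ≤ 1)]
    exact hγ'cont.norm.div hucont fun t ht => ne_of_gt (hupos t ht)
  have hmono : ∫ t in (0:ℝ)..1, h t / w t ≤ ∫ t in (0:ℝ)..1, ‖γ' t‖ / u t := by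
    refine intervalIntegral.integral_mono_on (by norm_num) hintlw hintq fun t ht => ?_
    show ‖γ' (cl t)‖ / w t ≤ ‖γ' t‖ / u t
    rw [hclid t ht]
    exact div_le_div_of_nonneg_left (norm_nonneg _) (hupos t ht) (hle t ht)
  have hw0 : w 0 = u 0 := by simp [hw]
  have hw1 : u 1 ≤ w 1 := hle 1 (by norm_num)
  have hlog1 : Real.log (u 1) ≤ Real.log (w 1) :=
    Real.log_le_log (hupos 1 (by norm_num)) hw1
  have hfin : Real.log (u 1) - Real.log (u 0) ≤ ∫ t in (0:ℝ)..1, ‖γ' t‖ / u t := by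
    rw [← hw0] at *
    calc Real.log (u 1) - Real.log (w 0)
        ≤ Real.log (w 1) - Real.log (w 0) := by linarith
      _ = ∫ t in (0:ℝ)..1, h t / w t := hftc.symm
      _ ≤ _ := hmono
  rw [qhLen]
  rw [hu] at hfin
  simpa [h0, h1] using hfin

lemma qhDist_lower {D : Set E} (hD : IsOpen D) (hconn : IsConnected D) (hne : D ≠ univ)
    {a b : E} (ha : a ∈ D) (hb : b ∈ D) :
    Real.log (bdDist D b) - Real.log (bdDist D a) ≤ qhDist D a b := by
  refine le_csInf ?_ ?_
  · obtain ⟨γ, γ', hc⟩ := (segChain_all hD hconn ha b hb).exists_isCurve ha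
    exact ⟨_, γ, γ', hc, rfl⟩
  · rintro l ⟨γ, γ', hc, rfl⟩
    exact qhLen_lower hD hne hc

end AuxLemmas


/-- if `D` satisfies the quasihyperbolic growth condition with constant `c'`
and `f` is `(M,C)`-CQH onto `D'`, then `d_{D'}(f(z₀))/d_{D'}(f(z₁)) ≥ e^{2MC}·λ^{2Mc'}` with
`λ ≥ 1` implies `|z₁ - z₀| ≥ (λ² - 1)·min{d_D(z₁), d_D(z₀)}`; in particular, when `λ > 1`,
`min{d_D(z₁), d_D(z₀)} ≤ |z₁ - z₀|/(λ² - 1)`. -/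
theorem stmt16 {E : Type*} [NormedAddCommGroup E] [NormedSpace ℝ E] [CompleteSpace E]
    {E' : Type*} [NormedAddCommGroup E'] [NormedSpace ℝ E'] [CompleteSpace E']
    (D : Set E) (D' : Set E')
    (hDopen : IsOpen D) (hDconn : IsConnected D) (hDproper : D ≠ univ)
    (hD'open : IsOpen D') (hD'conn : IsConnected D') (hD'proper : D' ≠ univ)
    (c' M C : ℝ) (hc' : 1 ≤ c') (hM : 1 ≤ M) (hC : 0 ≤ C)
    (hgrowth : ∀ z₁ ∈ D, ∀ z₂ ∈ D, qhDist D z₁ z₂ ≤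
      c' * Real.log (1 + dist z₁ z₂ / min (bdDist D z₁) (bdDist D z₂)))
    (f : E → E') (hf : IsHomeoOn f D D') (hcqh : IsCQH M C D D' f)
    (z₁ z₀ : E) (hz₁ : z₁ ∈ D) (hz₀ : z₀ ∈ D)
    (lam : ℝ) (hlam : 1 ≤ lam)
    (hratio : Real.exp (2 * M * C) * lam ^ (2 * M * c') ≤
      bdDist D' (f z₀) / bdDist D' (f z₁)) :
    (lam ^ 2 - 1) * min (bdDist D z₁) (bdDist D z₀) ≤ dist z₁ z₀ ∧
      (1 < lam → min (bdDist D z₁) (bdDist D z₀) ≤ dist z₁ z₀ / (lam ^ 2 - 1)) := by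
  have hfz₁ : f z₁ ∈ D' := hf.2.2.1 ▸ mem_image_of_mem f hz₁
  have hfz₀ : f z₀ ∈ D' := hf.2.2.1 ▸ mem_image_of_mem f hz₀
  have hd1 : 0 < bdDist D' (f z₁) := bdDist_pos' D' hD'open hD'proper hfz₁
  have hd0 : 0 < bdDist D' (f z₀) := bdDist_pos' D' hD'open hD'proper hfz₀
  have hm1 : 0 < bdDist D z₁ := bdDist_pos' D hDopen hDproper hz₁
  have hm0 : 0 < bdDist D z₀ := bdDist_pos' D hDopen hDproper hz₀
  set m := min (bdDist D z₁) (bdDist D z₀) with hm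
  have hmpos : 0 < m := lt_min hm1 hm0
  have hlam0 : (0:ℝ) < lam := lt_of_lt_of_le one_pos hlam
  have hlog : Real.log (bdDist D' (f z₀)) - Real.log (bdDist D' (f z₁)) ≤
      qhDist D' (f z₁) (f z₀) := qhDist_lower hD'open hD'conn hD'proper hfz₁ hfz₀
  have h2 := (hcqh z₁ hz₁ z₀ hz₀).2
  have h3 := hgrowth z₁ hz₁ z₀ hz₀
  have hpos : (0:ℝ) < Real.exp (2 * M * C) * lam ^ (2 * M * c') :=
    mul_pos (Real.exp_pos _) (Real.rpow_pos_of_pos hlam0 _)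
  have h4 : 2 * M * C + 2 * M * c' * Real.log lam ≤
      Real.log (bdDist D' (f z₀)) - Real.log (bdDist D' (f z₁)) := by
    have hll := Real.log_le_log hpos hratio
    rw [Real.log_mul (ne_of_gt (Real.exp_pos _))
        (ne_of_gt (Real.rpow_pos_of_pos hlam0 _)), Real.log_exp,
      Real.log_rpow hlam0,
      Real.log_div (ne_of_gt hd0) (ne_of_gt hd1)] at hll
    linarith
  set L := Real.log (1 + dist z₁ z₀ / m) with hL
  have h5 : 2 * M * C + 2 * M * c' * Real.log lam ≤ M * (c' * L) + C := by
    have hchain := le_trans h4 (le_trans hlog h2)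
    have h6 : M * qhDist D z₁ z₀ ≤ M * (c' * L) :=
      mul_le_mul_of_nonneg_left h3 (by linarith)
    linarith
  have hloglam : 0 ≤ Real.log lam := Real.log_nonneg hlam
  have hMc' : (0:ℝ) < M * c' := by nlinarith
  have h8 : 2 * M * c' * Real.log lam ≤ M * (c' * L) := by nlinarith
  have h8' : (M * c') * (2 * Real.log lam) ≤ (M * c') * L := by
    calc (M * c') * (2 * Real.log lam) = 2 * M * c' * Real.log lam := by ring
      _ ≤ M * (c' * L) := h8
      _ = (M * c') * L := by ring
  have h7 : 2 * Real.log lam ≤ L := le_of_mul_le_mul_left h8' hMc'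
  have h1t : (0:ℝ) < 1 + dist z₁ z₀ / m := by
    have : (0:ℝ) ≤ dist z₁ z₀ / m := div_nonneg dist_nonneg hmpos.le
    linarith
  have h9 : lam ^ 2 ≤ 1 + dist z₁ z₀ / m := by
    have hexp := Real.exp_le_exp.mpr h7
    rw [hL] at hexp
    rw [Real.exp_log h1t] at hexp
    have hexp2 : Real.exp (2 * Real.log lam) = lam ^ 2 := by
      rw [two_mul, Real.exp_add, Real.exp_log hlam0]; ring
    rw [hexp2] at hexp
    exact hexp
  have h10 : (lam ^ 2 - 1) * m ≤ dist z₁ z₀ := by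
    have hdd : lam ^ 2 - 1 ≤ dist z₁ z₀ / m := by linarith
    calc (lam ^ 2 - 1) * m ≤ (dist z₁ z₀ / m) * m :=
          mul_le_mul_of_nonneg_right hdd hmpos.le
      _ = dist z₁ z₀ := div_mul_cancel₀ _ (ne_of_gt hmpos)
  refine ⟨h10, fun hl => ?_⟩
  have hpos2 : (0:ℝ) < lam ^ 2 - 1 := by nlinarith
  rw [le_div_iff₀ hpos2, mul_comm]
  exact h10
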